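/- Let θ ∈ ℝ and σ > 0, let X be a real random variable with the Gaussian distribution N(θ, σ²) (mean θ, variance σ²), and let Z be an independent real random variable with the standard normal distribution N(0,1). Then for every integer n ≥ 0, the expectation of the complex random variable (X + iσZ)^n equals θ^n. Equivalently, defining the Hermite-type polynomial H_n(x; σ²) := E_{Z∼N(0,1)}[(x + iσZ)^n], one has ∫_ℝ H_n(x; σ²) · (2πσ²)^{−1/2} exp(−(x−θ)²/(2σ²)) dx = θ^n. -/

import Mathlib

open MeasureTheory ProbabilityTheory

noncomputable section

open Real Filter Set Topology

namespace HGMI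

def γ : Measure ℝ := gaussianReal 0 1

instance : IsProbabilityMeasure γ := by unfold γ; infer_instance

def p (x : ℝ) : ℝ := gaussianPDFReal 0 1 x

lemma p_eq (x : ℝ) : p x = (Real.sqrt (2 * π))⁻¹ * Real.exp (-x ^ 2 / 2) := by
  simp only [p, gaussianPDFReal]
  norm_num

lemma p_nonneg (x : ℝ) : 0 ≤ p x := gaussianPDFReal_nonneg 0 1 x

lemma p_meas : Measurable p := measurable_gaussianPDFReal 0 1

lemma gamma_eq : γ = volume.withDensity (fun x => ((p x).toNNReal : ENNReal)) := by
  rw [γ, gaussianReal_of_var_ne_zero 0 one_ne_zero]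
  congr 1

lemma integral_gamma {E : Type*} [NormedAddCommGroup E] [NormedSpace ℝ E] (f : ℝ → E) :
    ∫ x, f x ∂γ = ∫ x, p x • f x := by
  rw [gamma_eq, integral_withDensity_eq_integral_smul (p_meas.real_toNNReal)]
  congr 1 with x
  simp [NNReal.smul_def, Real.coe_toNNReal _ (p_nonneg x)]

lemma integrable_gamma_iff {E : Type*} [NormedAddCommGroup E] [NormedSpace ℝ E] (f : ℝ → E) :
    Integrable f γ ↔ Integrable (fun x => p x • f x) volume := by
  rw [gamma_eq]
  refine (integrable_withDensity_iff_integrable_smul (g := f) (p_meas.real_toNNReal)).trans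
    (integrable_congr ?_)
  filter_upwards with x
  simp [NNReal.smul_def, Real.coe_toNNReal _ (p_nonneg x)]


lemma one_add_pow_le (m : ℕ) {a : ℝ} (ha : 0 ≤ a) : (1 + a) ^ m ≤ 2 ^ m * (1 + a ^ m) := by
  have h1 : (1 + a) ^ m ≤ (2 * max 1 a) ^ m := by
    apply pow_le_pow_left₀ (by linarith)
    rcases le_total a 1 with h | h
    · simp [max_eq_left h]; linarith
    · simp [max_eq_right h]; linarith
  rw [mul_pow] at h1
  refine h1.trans ?_
  gcongr
  rcases le_total a 1 with h | h
  · rw [max_eq_left h]; simp [one_pow]; positivity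
  · rw [max_eq_right h]; nlinarith [pow_nonneg ha m]

lemma integrable_poly_gauss (m : ℕ) :
    Integrable (fun x : ℝ => (1 + |x|) ^ m * Real.exp (-x ^ 2 / 2)) volume := by
  have h1 : Integrable (fun x : ℝ => Real.exp (-x ^ 2 / 2)) volume := by
    have := integrable_exp_neg_mul_sq (b := (1:ℝ)/2) (by norm_num)
    refine this.congr ?_
    filter_upwards with x; ring_nf
  have h2 : Integrable (fun x : ℝ => |x| ^ m * Real.exp (-x ^ 2 / 2)) volume := by
    have h := integrable_rpow_mul_exp_neg_mul_sq (b := (1:ℝ)/2) (by norm_num)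
      (s := (m : ℝ)) (by linarith [Nat.cast_nonneg (α := ℝ) m])
    refine h.abs.congr ?_
    filter_upwards with x
    rw [Real.rpow_natCast, abs_mul, abs_pow, abs_of_pos (Real.exp_pos _)]
    ring_nf
  refine ((h1.add h2).const_mul (2 ^ m)).mono' ?_ ?_
  · exact (((continuous_const.add continuous_abs).pow m).mul
      (Real.continuous_exp.comp (by fun_prop))).aestronglyMeasurable
  · filter_upwards with x
    have hx : (0:ℝ) ≤ |x| := abs_nonneg x
    have he : (0:ℝ) < Real.exp (-x ^ 2 / 2) := Real.exp_pos _
    rw [Real.norm_eq_abs, abs_of_nonneg (by positivity)]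
    have := one_add_pow_le m hx
    calc (1 + |x|) ^ m * Real.exp (-x ^ 2 / 2)
        ≤ 2 ^ m * (1 + |x| ^ m) * Real.exp (-x ^ 2 / 2) := by nlinarith
      _ = 2 ^ m * (Real.exp (-x ^ 2 / 2) + |x| ^ m * Real.exp (-x ^ 2 / 2)) := by ring

lemma integrable_one_add_abs (m : ℕ) :
    Integrable (fun x : ℝ => (1 + |x|) ^ m) γ := by
  rw [integrable_gamma_iff]
  refine ((integrable_poly_gauss m).const_mul ((Real.sqrt (2 * π))⁻¹)).mono' ?_ ?_
  · exact (p_meas.aestronglyMeasurable.smul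
      ((continuous_const.add continuous_abs).pow m).aestronglyMeasurable)
  · filter_upwards with x
    have h0 : (0:ℝ) ≤ (1 + |x|) ^ m := by positivity
    rw [smul_eq_mul, Real.norm_eq_abs, abs_of_nonneg (mul_nonneg (p_nonneg x) h0), p_eq]
    ring_nf
    rfl

lemma integrable_of_poly_bound {f : ℝ → ℂ} (hf : AEStronglyMeasurable f γ)
    (C : ℝ) (m : ℕ) (hb : ∀ x, ‖f x‖ ≤ C * (1 + |x|) ^ m) : Integrable f γ :=
  ((integrable_one_add_abs m).const_mul C).mono' hf (ae_of_all _ hb)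

lemma integrable_prod_of_poly_bound {f : ℝ × ℝ → ℂ}
    (hf : AEStronglyMeasurable f (γ.prod γ)) (C : ℝ) (m : ℕ)
    (hb : ∀ q : ℝ × ℝ, ‖f q‖ ≤ C * ((1 + |q.1|) ^ m * (1 + |q.2|) ^ m)) :
    Integrable f (γ.prod γ) :=
  (((integrable_one_add_abs m).mul_prod (integrable_one_add_abs m)).const_mul C).mono'
    hf (ae_of_all _ hb)

lemma tendsto_poly_gauss (m : ℕ) :
    Tendsto (fun y : ℝ => (1 + y) ^ m * Real.exp (-y ^ 2 / 2)) atTop (𝓝 0) := by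
  have h0 : Tendsto (fun y : ℝ => Real.exp (3/2) * ((1 + y) ^ m * Real.exp (-(1 + y))))
      atTop (𝓝 (Real.exp (3/2) * 0)) := by
    apply Tendsto.const_mul
    have := (tendsto_pow_mul_exp_neg_atTop_nhds_zero m).comp
      (tendsto_atTop_add_const_left atTop (1:ℝ) tendsto_id)
    simpa [Function.comp_def] using this
  rw [mul_zero] at h0
  apply squeeze_zero' ?_ ?_ h0
  · filter_upwards [eventually_ge_atTop (0:ℝ)] with y hy
    positivity
  · filter_upwards [eventually_ge_atTop (0:ℝ)] with y hy
    have h1 : Real.exp (-y ^ 2 / 2) ≤ Real.exp (3/2) * Real.exp (-(1 + y)) := by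
      rw [← Real.exp_add]
      apply Real.exp_le_exp.2
      nlinarith [sq_nonneg (y - 1)]
    have h2 : (0:ℝ) ≤ (1 + y) ^ m := by positivity
    calc (1 + y) ^ m * Real.exp (-y ^ 2 / 2)
        ≤ (1 + y) ^ m * (Real.exp (3/2) * Real.exp (-(1 + y))) := by nlinarith
      _ = Real.exp (3/2) * ((1 + y) ^ m * Real.exp (-(1 + y))) := by ring

lemma norm_aux {c b d : ℂ} (k : ℕ) (x z : ℝ) :
    ‖(c + b * x + d * z) ^ k‖ ≤
      ((1 + ‖c‖) * (1 + ‖b‖) * (1 + ‖d‖)) ^ k * ((1 + |x|) ^ k * (1 + |z|) ^ k) := by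
  rw [norm_pow, ← mul_pow, ← mul_pow]
  apply pow_le_pow_left₀ (norm_nonneg _)
  have h1 : ‖c + b * x + d * z‖ ≤ ‖c‖ + ‖b‖ * |x| + ‖d‖ * |z| := by
    refine (norm_add_le _ _).trans ?_
    gcongr
    · refine (norm_add_le _ _).trans ?_
      gcongr
      rw [norm_mul, Complex.norm_real, Real.norm_eq_abs]
    · rw [norm_mul, Complex.norm_real, Real.norm_eq_abs]
  refine h1.trans ?_
  have hc := norm_nonneg c; have hb := norm_nonneg b; have hd := norm_nonneg d
  have hx := abs_nonneg x; have hz := abs_nonneg z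
  nlinarith [mul_nonneg hb hx, mul_nonneg hd hz, mul_nonneg (mul_nonneg hb hx) (mul_nonneg hd hz),
    mul_nonneg hc hx, mul_nonneg hc hz, mul_nonneg hx hz,
    mul_nonneg (mul_nonneg hc hb) hd, mul_nonneg hc (mul_nonneg hx hz)]

lemma norm_aux1 {c b : ℂ} (k : ℕ) (x : ℝ) :
    ‖(c + b * x) ^ k‖ ≤ ((1 + ‖c‖) * (1 + ‖b‖)) ^ k * (1 + |x|) ^ k := by
  have h := norm_aux (c := c) (b := b) (d := 0) k x 0
  simpa using h

/-- Whole-line FTC: integral of derivative vanishing at both infinities is zero. -/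
lemma integral_deriv_zero {F F' : ℝ → ℂ} (hd : ∀ x, HasDerivAt F (F' x) x)
    (hi : Integrable F' volume) (ht : Tendsto F atTop (𝓝 0))
    (hb : Tendsto F atBot (𝓝 0)) : ∫ x, F' x = 0 := by
  have hIoi : ∫ x in Ioi (0:ℝ), F' x = 0 - F 0 :=
    integral_Ioi_of_hasDerivAt_of_tendsto' (fun x _ => hd x) hi.integrableOn ht
  have hIic : ∫ x in Iic (0:ℝ), F' x = F 0 := by
    have h2 : ∀ x ∈ Ici (0:ℝ), HasDerivAt (fun y : ℝ => F (-y)) (-F' (-x)) x := by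
      intro x _
      have h := HasDerivAt.scomp_of_eq (x := x) (h := fun y : ℝ => -y) (hd (-x)) (hasDerivAt_neg x) rfl
      simpa [mul_comm, Function.comp_def] using h
    have h3 : Tendsto (fun y : ℝ => F (-y)) atTop (𝓝 0) := hb.comp tendsto_neg_atTop_atBot
    have h4 : IntegrableOn (fun x : ℝ => -F' (-x)) (Ioi 0) volume := hi.comp_neg.neg.integrableOn
    have h5 := integral_Ioi_of_hasDerivAt_of_tendsto' h2 h4 h3
    rw [integral_neg] at h5
    have h6 : ∫ x in Ioi (0:ℝ), F' (-x) = F 0 := by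
      simp only [neg_zero, zero_sub, neg_neg] at h5 ⊢
      linear_combination -h5
    rw [← h6, integral_comp_neg_Ioi]
    norm_num
  rw [← intervalIntegral.integral_Iic_add_Ioi (b := (0:ℝ)) hi.integrableOn hi.integrableOn, hIoi, hIic]
  ring

lemma hasDerivAt_p (x : ℝ) : HasDerivAt p (-x * p x) x := by
  have h1 : HasDerivAt (fun x : ℝ => -x ^ 2 / 2) (-x) x := by
    have h := ((hasDerivAt_pow 2 x).neg).div_const 2
    refine h.congr_deriv ?_
    push_cast
    ring
  have h2 := (h1.exp).const_mul ((Real.sqrt (2 * π))⁻¹)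
  have : p = fun x => (Real.sqrt (2 * π))⁻¹ * Real.exp (-x ^ 2 / 2) := funext p_eq
  rw [this]
  refine h2.congr_deriv ?_
  simp only
  ring

lemma p_cont : Continuous p := by
  have : p = fun x => (Real.sqrt (2 * π))⁻¹ * Real.exp (-x ^ 2 / 2) := funext p_eq
  rw [this]; fun_prop

lemma p_le (x : ℝ) : p x ≤ (Real.sqrt (2 * π))⁻¹ * Real.exp (-x ^ 2 / 2) := le_of_eq (p_eq x)

/-- Stein-type identity for the standard Gaussian. -/
lemma stein (c a : ℂ) (k : ℕ) :
    ∫ x : ℝ, (x : ℂ) * (c + a * x) ^ k ∂γ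
      = a * k * ∫ x : ℝ, (c + a * x) ^ (k - 1) ∂γ := by
  set Kc : ℝ := ((1 + ‖c‖) * (1 + ‖a‖)) ^ k with hKc
  have hKc0 : (0:ℝ) ≤ Kc := by positivity
  have hbase : (1:ℝ) ≤ (1 + ‖c‖) * (1 + ‖a‖) := by
    nlinarith [norm_nonneg c, norm_nonneg a]
  have hKc' : ∀ j ≤ k, ((1 + ‖c‖) * (1 + ‖a‖)) ^ j ≤ Kc := by
    intro j hj
    rw [hKc]
    exact _root_.pow_le_pow_right₀ hbase hj
  set g : ℝ → ℂ := fun x => (c + a * x) ^ k with hg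
  set g' : ℝ → ℂ := fun x => (k : ℂ) * (c + a * x) ^ (k - 1) * a with hg'
  have hder : ∀ x : ℝ, HasDerivAt (fun y : ℝ => (c + a * y) ^ k) (g' x) x := by
    intro x
    have h0 : HasDerivAt (fun y : ℝ => ((y : ℝ) : ℂ)) 1 x := (hasDerivAt_id x).ofReal_comp
    have h1 : HasDerivAt (fun y : ℝ => c + a * y) a x := by
      simpa using (h0.const_mul a).const_add c
    have h2 := HasDerivAt.scomp_of_eq (x := x) (h := fun y : ℝ => c + a * y)
      (hasDerivAt_pow k (c + a * (x:ℂ))) h1 rfl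
    have h3 : a • ((k : ℂ) * (c + a * (x:ℂ)) ^ (k - 1)) = g' x := by
      simp [hg', smul_eq_mul]; ring
    rw [h3] at h2
    exact h2
  set f1 : ℝ → ℂ := fun x => ((-x * p x : ℝ) : ℂ) * g x with hf1
  set f2 : ℝ → ℂ := fun x => ((p x : ℝ) : ℂ) * g' x with hf2
  have hF : ∀ x : ℝ, HasDerivAt (fun y : ℝ => ((p y : ℝ) : ℂ) * g y) (f1 x + f2 x) x := by
    intro x
    exact ((hasDerivAt_p x).ofReal_comp).mul (hder x)
  have hgb : ∀ x : ℝ, ‖g x‖ ≤ Kc * (1 + |x|) ^ k := fun x => norm_aux1 k x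
  have hg'b : ∀ x : ℝ, ‖g' x‖ ≤ k * ‖a‖ * Kc * (1 + |x|) ^ k := by
    intro x
    have h1 : ‖(c + a * x) ^ (k - 1)‖ ≤ Kc * (1 + |x|) ^ k := by
      refine (norm_aux1 (k - 1) x).trans ?_
      have e1 : ((1 + ‖c‖) * (1 + ‖a‖)) ^ (k-1) ≤ Kc := hKc' _ (Nat.sub_le k 1)
      have e2 : (1 + |x|) ^ (k-1) ≤ (1 + |x|) ^ k :=
        pow_le_pow_right₀ (by linarith [abs_nonneg x]) (Nat.sub_le k 1)
      have h3 : (0:ℝ) ≤ (1 + |x|) ^ (k-1) := by positivity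
      nlinarith [pow_nonneg (le_trans zero_le_one hbase) (k-1)]
    calc ‖g' x‖ = k * ‖(c + a * x) ^ (k - 1)‖ * ‖a‖ := by
          simp [hg', norm_mul]
      _ ≤ k * (Kc * (1 + |x|) ^ k) * ‖a‖ := by
          have : (0:ℝ) ≤ (k:ℝ) := Nat.cast_nonneg k
          gcongr
      _ = k * ‖a‖ * Kc * (1 + |x|) ^ k := by ring
  have hex : ∀ x : ℝ, (0:ℝ) < Real.exp (-x ^ 2 / 2) := fun x => Real.exp_pos _
  have hIf1 : Integrable f1 volume := by
    refine ((integrable_poly_gauss (k+1)).const_mul ((Real.sqrt (2*π))⁻¹ * Kc)).mono' ?_ ?_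
    · exact (Complex.continuous_ofReal.comp ((continuous_neg.mul p_cont))).mul
        ((continuous_const.add ((continuous_const.mul Complex.continuous_ofReal : Continuous fun x : ℝ => a * (x:ℂ)))).pow k)
        |>.aestronglyMeasurable
    · filter_upwards with x
      have hgx := hgb x
      have hpx := p_nonneg x
      have hple := p_le x
      have hgx0 := norm_nonneg (g x)
      calc ‖f1 x‖ = |x| * p x * ‖g x‖ := by
            simp [hf1, norm_mul, Complex.norm_real, abs_mul, abs_of_nonneg hpx, mul_assoc]
        _ ≤ (1 + |x|) * ((Real.sqrt (2*π))⁻¹ * Real.exp (-x ^ 2 / 2)) * (Kc * (1 + |x|) ^ k) := by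
            have habs := abs_nonneg x
            have h4 : |x| * p x ≤ (1 + |x|) * ((Real.sqrt (2*π))⁻¹ * Real.exp (-x ^ 2 / 2)) := by
              nlinarith
            exact mul_le_mul h4 hgx hgx0 (by positivity)
        _ = (Real.sqrt (2*π))⁻¹ * Kc * ((1 + |x|) ^ (k+1) * Real.exp (-x ^ 2 / 2)) := by ring
  have hIf2 : Integrable f2 volume := by
    refine ((integrable_poly_gauss (k+1)).const_mul
      ((Real.sqrt (2*π))⁻¹ * (k * ‖a‖ * Kc))).mono' ?_ ?_
    · exact (Complex.continuous_ofReal.comp p_cont).mul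
        ((continuous_const.mul ((continuous_const.add
          ((continuous_const.mul Complex.continuous_ofReal : Continuous fun x : ℝ => a * (x:ℂ)))).pow (k-1))).mul continuous_const)
        |>.aestronglyMeasurable
    · filter_upwards with x
      have hgx := hg'b x
      have hpx := p_nonneg x
      have hple := p_le x
      have habs := abs_nonneg x
      have hp1 : (1:ℝ) ≤ (1 + |x|) := by linarith
      have hpk : (1 + |x|) ^ k ≤ (1 + |x|) ^ (k+1) := pow_le_pow_right₀ hp1 (Nat.le_succ k)
      have hg0 := norm_nonneg (g' x)
      have hka : (0:ℝ) ≤ (k:ℝ) * ‖a‖ * Kc := by positivity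
      calc ‖f2 x‖ = p x * ‖g' x‖ := by
            simp [hf2, norm_mul, Complex.norm_real, abs_of_nonneg hpx]
        _ ≤ ((Real.sqrt (2*π))⁻¹ * Real.exp (-x ^ 2 / 2)) * ((k * ‖a‖ * Kc) * (1 + |x|) ^ (k+1)) := by
            have h5 : ‖g' x‖ ≤ (k * ‖a‖ * Kc) * (1 + |x|) ^ (k+1) := by
              refine hgx.trans ?_
              have := pow_nonneg (by linarith : (0:ℝ) ≤ 1 + |x|) k
              nlinarith
            have h6 : (0:ℝ) ≤ (Real.sqrt (2*π))⁻¹ * Real.exp (-x ^ 2 / 2) := by positivity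
            nlinarith
        _ = (Real.sqrt (2*π))⁻¹ * (k * ‖a‖ * Kc) * ((1 + |x|) ^ (k+1) * Real.exp (-x ^ 2 / 2)) := by
            ring
  have htend : ∀ l : Filter ℝ, Tendsto (abs : ℝ → ℝ) l atTop →
      Tendsto (fun x : ℝ => ((p x : ℝ) : ℂ) * g x) l (𝓝 0) := by
    intro l hl
    have hbnd : ∀ x : ℝ, ‖((p x : ℝ) : ℂ) * g x‖ ≤
        (Real.sqrt (2*π))⁻¹ * Kc * ((1 + |x|) ^ k * Real.exp (-|x| ^ 2 / 2)) := by
      intro x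
      have hgx := hgb x
      have hpx := p_nonneg x
      have hple := p_le x
      have h6 : (0:ℝ) ≤ (Real.sqrt (2*π))⁻¹ * Real.exp (-x ^ 2 / 2) := by positivity
      have hsq : |x| ^ 2 = x ^ 2 := sq_abs x
      rw [norm_mul, Complex.norm_real, Real.norm_eq_abs, abs_of_nonneg hpx, hsq]
      nlinarith [pow_nonneg (by linarith [abs_nonneg x] : (0:ℝ) ≤ 1 + |x|) k, norm_nonneg (g x)]
    refine squeeze_zero_norm hbnd ?_
    have h7 : Tendsto (fun y : ℝ => (Real.sqrt (2*π))⁻¹ * Kc *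
        ((1 + y) ^ k * Real.exp (-y ^ 2 / 2))) atTop (𝓝 ((Real.sqrt (2*π))⁻¹ * Kc * 0)) :=
      (tendsto_poly_gauss k).const_mul _
    rw [mul_zero] at h7
    exact h7.comp hl
  have hzero : ∫ x : ℝ, (f1 x + f2 x) = 0 :=
    integral_deriv_zero hF (hIf1.add hIf2)
      (htend atTop tendsto_abs_atTop_atTop) (htend atBot tendsto_abs_atBot_atTop)
  rw [integral_add hIf1 hIf2] at hzero
  have e1 : ∫ x : ℝ, f1 x = -∫ x : ℝ, (x : ℂ) * (c + a * x) ^ k ∂γ := by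
    rw [integral_gamma, ← integral_neg]
    congr 1 with x
    simp only [hf1, hg, Complex.real_smul]
    push_cast
    ring
  have e2 : ∫ x : ℝ, f2 x = a * k * ∫ x : ℝ, (c + a * x) ^ (k - 1) ∂γ := by
    calc ∫ x : ℝ, f2 x = ∫ x : ℝ, (a * (k:ℂ)) • (p x • (c + a * (x:ℂ)) ^ (k - 1)) := by
          congr 1 with x
          simp only [hf2, hg', Complex.real_smul, smul_eq_mul]
          ring
      _ = (a * (k:ℂ)) • ∫ x : ℝ, p x • (c + a * (x:ℂ)) ^ (k - 1) := integral_smul _ _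
      _ = a * k * ∫ x : ℝ, (c + a * x) ^ (k - 1) ∂γ := by
          rw [← integral_gamma]; simp [smul_eq_mul]
  rw [e1, e2] at hzero
  linear_combination -hzero

lemma integral_cmul (μ : Measure ℝ) (r : ℂ) (f : ℝ → ℂ) :
    ∫ x, r * f x ∂μ = r * ∫ x, f x ∂μ := by
  simpa [smul_eq_mul] using integral_smul (μ := μ) r f

lemma cont_B (c b d : ℂ) (j : ℕ) :
    Continuous (fun x : ℝ => ∫ z : ℝ, (c + b * x + d * z) ^ j ∂γ) := by
  rw [continuous_iff_continuousAt]
  intro x₀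
  have hev : ∀ᶠ x : ℝ in 𝓝 x₀, |x| ≤ |x₀| + 1 := by
    have h : Tendsto (fun x : ℝ => |x|) (𝓝 x₀) (𝓝 |x₀|) := continuous_abs.continuousAt
    exact h.eventually_le_const (by linarith)
  apply continuousAt_of_dominated (μ := γ)
    (bound := fun z : ℝ => ((1 + ‖c‖) * (1 + ‖b‖) * (1 + ‖d‖)) ^ j * (2 + |x₀|) ^ j * (1 + |z|) ^ j)
  · filter_upwards with x
    exact (Continuous.aestronglyMeasurable (by fun_prop))
  · filter_upwards [hev] with x hx
    filter_upwards with z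
    have h1 := norm_aux (c := c) (b := b) (d := d) j x z
    have h2 : (1 + |x|) ^ j ≤ (2 + |x₀|) ^ j := by
      apply pow_le_pow_left₀ (by linarith [abs_nonneg x]) (by linarith)
    have hK : (0:ℝ) ≤ ((1 + ‖c‖) * (1 + ‖b‖) * (1 + ‖d‖)) ^ j := by positivity
    have hz : (0:ℝ) ≤ (1 + |z|) ^ j := by positivity
    calc ‖(c + b * x + d * z) ^ j‖
        ≤ ((1 + ‖c‖) * (1 + ‖b‖) * (1 + ‖d‖)) ^ j * ((1 + |x|) ^ j * (1 + |z|) ^ j) := h1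
      _ ≤ ((1 + ‖c‖) * (1 + ‖b‖) * (1 + ‖d‖)) ^ j * (2 + |x₀|) ^ j * (1 + |z|) ^ j := by
          rw [mul_assoc (((1 + ‖c‖) * (1 + ‖b‖) * (1 + ‖d‖)) ^ j)]
          exact mul_le_mul_of_nonneg_left (mul_le_mul_of_nonneg_right h2 hz) hK
  · exact (integrable_one_add_abs j).const_mul _
  · filter_upwards with z
    fun_prop

lemma bound_B (c b d : ℂ) (j : ℕ) (x : ℝ) :
    ‖∫ z : ℝ, (c + b * x + d * z) ^ j ∂γ‖ ≤
      ((1 + ‖c‖) * (1 + ‖b‖) * (1 + ‖d‖)) ^ j * (∫ z : ℝ, (1 + |z|) ^ j ∂γ) * (1 + |x|) ^ j := by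
  refine (norm_integral_le_integral_norm _).trans ?_
  have h1 : ∫ z : ℝ, ‖(c + b * x + d * z) ^ j‖ ∂γ ≤
      ∫ z : ℝ, ((1 + ‖c‖) * (1 + ‖b‖) * (1 + ‖d‖)) ^ j * (1 + |x|) ^ j * (1 + |z|) ^ j ∂γ := by
    refine integral_mono_of_nonneg (ae_of_all _ fun z => norm_nonneg _)
      (((integrable_one_add_abs j).const_mul _)) (ae_of_all _ fun z => ?_)
    have h := norm_aux (c := c) (b := b) (d := d) j x z
    calc ‖(c + b * x + d * z) ^ j‖
        ≤ ((1 + ‖c‖) * (1 + ‖b‖) * (1 + ‖d‖)) ^ j * ((1 + |x|) ^ j * (1 + |z|) ^ j) := h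
      _ = ((1 + ‖c‖) * (1 + ‖b‖) * (1 + ‖d‖)) ^ j * (1 + |x|) ^ j * (1 + |z|) ^ j := by ring
  refine h1.trans ?_
  rw [integral_const_mul]
  ring_nf
  exact le_refl _

lemma M_nonneg (j : ℕ) : 0 ≤ ∫ z : ℝ, (1 + |z|) ^ j ∂γ :=
  integral_nonneg fun z => by positivity


lemma int_prod1 (w a : ℂ) (j : ℕ) :
    Integrable (fun q : ℝ × ℝ => (w + a * q.1 + a * Complex.I * q.2) ^ j) (γ.prod γ) := by
  refine integrable_prod_of_poly_bound (Continuous.aestronglyMeasurable (by fun_prop))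
    (((1 + ‖w‖) * (1 + ‖a‖) * (1 + ‖a * Complex.I‖)) ^ j) j fun q => ?_
  exact norm_aux j q.1 q.2

lemma int_prod2 (w a : ℂ) (j : ℕ) :
    Integrable (fun q : ℝ × ℝ => (q.1 : ℂ) * (w + a * q.1 + a * Complex.I * q.2) ^ j)
      (γ.prod γ) := by
  refine integrable_prod_of_poly_bound (Continuous.aestronglyMeasurable (by fun_prop))
    (((1 + ‖w‖) * (1 + ‖a‖) * (1 + ‖a * Complex.I‖)) ^ j) (j+1) fun q => ?_
  have h := norm_aux (c := w) (b := a) (d := a * Complex.I) j q.1 q.2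
  rw [norm_mul, Complex.norm_real, Real.norm_eq_abs]
  have h1 : (0:ℝ) ≤ |q.1| := abs_nonneg _
  have h2 : (0:ℝ) ≤ |q.2| := abs_nonneg _
  set C : ℝ := ((1 + ‖w‖) * (1 + ‖a‖) * (1 + ‖a * Complex.I‖)) ^ j with hC
  have hC0 : (0:ℝ) ≤ C := by positivity
  calc |q.1| * ‖(w + a * q.1 + a * Complex.I * q.2) ^ j‖
      ≤ (1 + |q.1|) * (C * ((1 + |q.1|) ^ j * (1 + |q.2|) ^ j)) :=
        mul_le_mul (by linarith) h (norm_nonneg _) (by linarith)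
    _ = C * ((1 + |q.1|) ^ (j+1) * (1 + |q.2|) ^ j) := by ring
    _ ≤ C * ((1 + |q.1|) ^ (j+1) * (1 + |q.2|) ^ (j+1)) := by
        have h3 : (1 + |q.2|) ^ j ≤ (1 + |q.2|) ^ (j+1) :=
          _root_.pow_le_pow_right₀ (by linarith) (Nat.le_succ j)
        have h4 : (0:ℝ) ≤ (1 + |q.1|) ^ (j+1) := by positivity
        exact mul_le_mul_of_nonneg_left (mul_le_mul_of_nonneg_left h3 h4) hC0

/-- The key double-integral identity, by induction using Stein's identity twice. -/
lemma key (w a : ℂ) (k : ℕ) :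
    ∫ x : ℝ, (∫ z : ℝ, (w + a * x + a * Complex.I * z) ^ k ∂γ) ∂γ = w ^ k := by
  induction k with
  | zero => simp
  | succ k ih =>
    set K : ℝ := ((1 + ‖w‖) * (1 + ‖a‖) * (1 + ‖a * Complex.I‖)) ^ k with hK
    have hK0 : (0:ℝ) ≤ K := by positivity
    set B : ℕ → ℝ → ℂ := fun j x => ∫ z : ℝ, (w + a * x + a * Complex.I * z) ^ j ∂γ with hB
    have hBcont : ∀ j, Continuous (B j) := fun j => cont_B w a (a * Complex.I) j
    have hBbound : ∀ j x, ‖B j x‖ ≤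
        ((1 + ‖w‖) * (1 + ‖a‖) * (1 + ‖a * Complex.I‖)) ^ j * (∫ z : ℝ, (1 + |z|) ^ j ∂γ)
          * (1 + |x|) ^ j := fun j x => bound_B w a (a * Complex.I) j x
    -- Step A: the inner integral
    have stepA : ∀ x : ℝ, B (k+1) x
        = (w + a * x) * B k x + (a * Complex.I) * ((a * Complex.I) * k * B (k-1) x) := by
      intro x
      have hsplit : ∀ z : ℝ, (w + a * x + a * Complex.I * z) ^ (k+1)
          = (w + a * x) * (w + a * x + a * Complex.I * z) ^ k
            + (a * Complex.I) * ((z : ℂ) * ((w + a * x) + (a * Complex.I) * z) ^ k) := by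
        intro z; ring
      have hint1 : Integrable (fun z : ℝ => (w + a * x) * (w + a * x + a * Complex.I * z) ^ k) γ := by
        refine integrable_of_poly_bound (Continuous.aestronglyMeasurable (by fun_prop))
          (‖w + a * x‖ * (((1 + ‖w + a * x‖) * (1 + ‖a * Complex.I‖)) ^ k)) k fun z => ?_
        rw [norm_mul]
        have h := norm_aux1 (c := w + a * x) (b := a * Complex.I) k z
        have := norm_nonneg (w + a * x)
        calc ‖w + a * x‖ * ‖(w + a * x + a * Complex.I * z) ^ k‖
            ≤ ‖w + a * x‖ * (((1 + ‖w + a * x‖) * (1 + ‖a * Complex.I‖)) ^ k * (1 + |z|) ^ k) := by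
              refine mul_le_mul_of_nonneg_left ?_ this
              convert h using 3 <;> push_cast <;> ring
          _ = ‖w + a * x‖ * ((1 + ‖w + a * x‖) * (1 + ‖a * Complex.I‖)) ^ k * (1 + |z|) ^ k := by
              ring
      have hint2 : Integrable (fun z : ℝ =>
          (a * Complex.I) * ((z : ℂ) * ((w + a * x) + (a * Complex.I) * z) ^ k)) γ := by
        refine integrable_of_poly_bound (Continuous.aestronglyMeasurable (by fun_prop))
          (‖a * Complex.I‖ * (((1 + ‖w + a * x‖) * (1 + ‖a * Complex.I‖)) ^ k)) (k+1) fun z => ?_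
        rw [norm_mul (a * Complex.I) _, norm_mul ((z:ℂ)) _]
        have h := norm_aux1 (c := w + a * x) (b := a * Complex.I) k z
        have hz1 : (1:ℝ) ≤ 1 + |z| := by linarith [abs_nonneg z]
        have hzk : (0:ℝ) ≤ (1 + |z|) ^ k := by positivity
        have hKk : (0:ℝ) ≤ ((1 + ‖w + a * x‖) * (1 + ‖a * Complex.I‖)) ^ k := by positivity
        have hnz : ‖(z:ℂ)‖ = |z| := Complex.norm_real z
        calc ‖a * Complex.I‖ * (‖(z:ℂ)‖ * ‖((w + a * x) + (a * Complex.I) * z) ^ k‖)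
            ≤ ‖a * Complex.I‖ * ((1 + |z|) *
                (((1 + ‖w + a * x‖) * (1 + ‖a * Complex.I‖)) ^ k * (1 + |z|) ^ k)) := by
              refine mul_le_mul_of_nonneg_left ?_ (norm_nonneg _)
              refine mul_le_mul ?_ h (norm_nonneg _) (by linarith)
              rw [hnz]; linarith
          _ = ‖a * Complex.I‖ * ((1 + ‖w + a * x‖) * (1 + ‖a * Complex.I‖)) ^ k
                * (1 + |z|) ^ (k+1) := by ring
      calc B (k+1) x = ∫ z : ℝ, ((w + a * x) * (w + a * x + a * Complex.I * z) ^ k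
            + (a * Complex.I) * ((z : ℂ) * ((w + a * x) + (a * Complex.I) * z) ^ k)) ∂γ := by
            rw [hB]; exact integral_congr_ae (ae_of_all _ fun z => hsplit z)
        _ = (w + a * x) * B k x + (a * Complex.I) * ((a * Complex.I) * k * B (k-1) x) := by
            rw [integral_add hint1 hint2, integral_cmul, integral_cmul,
              stein (w + a * x) (a * Complex.I) k]
    -- bounds for B
    set M : ℕ → ℝ := fun j => ∫ z : ℝ, (1 + |z|) ^ j ∂γ with hM
    set KB : ℕ → ℝ := fun j =>
      ((1 + ‖w‖) * (1 + ‖a‖) * (1 + ‖a * Complex.I‖)) ^ j * M j with hKB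
    have hKB0 : ∀ j, 0 ≤ KB j := fun j => mul_nonneg (by positivity) (M_nonneg j)
    have hb : ∀ j x, ‖B j x‖ ≤ KB j * (1 + |x|) ^ j := fun j x => hBbound j x
    have hbk : ∀ x : ℝ, ‖B (k-1) x‖ ≤ KB (k-1) * (1 + |x|) ^ k := by
      intro x
      refine (hb (k-1) x).trans ?_
      have h1 : (1 + |x|) ^ (k-1) ≤ (1 + |x|) ^ k :=
        _root_.pow_le_pow_right₀ (by linarith [abs_nonneg x]) (Nat.sub_le k 1)
      exact mul_le_mul_of_nonneg_left h1 (hKB0 (k-1))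
    -- integrability of the three pieces
    have hI1 : Integrable (fun x : ℝ => w * B k x) γ := by
      refine integrable_of_poly_bound
        ((continuous_const.mul (hBcont k)).aestronglyMeasurable) (‖w‖ * KB k) k fun x => ?_
      rw [norm_mul, mul_assoc]
      exact mul_le_mul_of_nonneg_left (hb k x) (norm_nonneg w)
    have hI2 : Integrable (fun x : ℝ => a * (x : ℂ) * B k x) γ := by
      refine integrable_of_poly_bound
        (((continuous_const.mul Complex.continuous_ofReal).mul
          (hBcont k)).aestronglyMeasurable) (‖a‖ * KB k) (k+1) fun x => ?_
      rw [norm_mul, norm_mul, Complex.norm_real, Real.norm_eq_abs]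
      have h0 := abs_nonneg x
      have h1 := hb k x
      have h2 : (0:ℝ) ≤ (1 + |x|) ^ k := by positivity
      calc ‖a‖ * |x| * ‖B k x‖ ≤ ‖a‖ * (1 + |x|) * (KB k * (1 + |x|) ^ k) := by
            refine mul_le_mul ?_ h1 (norm_nonneg _) (by positivity)
            exact mul_le_mul_of_nonneg_left (by linarith) (norm_nonneg a)
        _ = ‖a‖ * KB k * (1 + |x|) ^ (k+1) := by ring
    have hI3 : Integrable (fun x : ℝ =>
        (a * Complex.I) * ((a * Complex.I) * k * B (k-1) x)) γ := by
      refine integrable_of_poly_bound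
        ((continuous_const.mul ((continuous_const.mul
          (hBcont (k-1))))).aestronglyMeasurable)
        (‖a * Complex.I‖ * (‖a * Complex.I‖ * k * KB (k-1))) k fun x => ?_
      rw [norm_mul (a * Complex.I), norm_mul _ (B (k-1) x), norm_mul (a * Complex.I) ((k:ℂ)), RCLike.norm_natCast]
      have h1 := hbk x
      have hn := norm_nonneg (a * Complex.I)
      have hk0 : (0:ℝ) ≤ (k:ℝ) := Nat.cast_nonneg k
      calc ‖a * Complex.I‖ * (‖a * Complex.I‖ * (k:ℝ) * ‖B (k-1) x‖)
          ≤ ‖a * Complex.I‖ * (‖a * Complex.I‖ * (k:ℝ) * (KB (k-1) * (1 + |x|) ^ k)) := by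
            refine mul_le_mul_of_nonneg_left ?_ hn
            exact mul_le_mul_of_nonneg_left h1 (by positivity)
        _ = ‖a * Complex.I‖ * (‖a * Complex.I‖ * (k:ℝ) * KB (k-1)) * (1 + |x|) ^ k := by ring
    -- Fubini + Stein in the x variable
    have swap1 : ∫ x : ℝ, (x : ℂ) * B k x ∂γ = a * k * ∫ x : ℝ, B (k-1) x ∂γ := by
      have e1 : ∫ x : ℝ, (x : ℂ) * B k x ∂γ
          = ∫ x : ℝ, ∫ z : ℝ, (x : ℂ) * (w + a * x + a * Complex.I * z) ^ k ∂γ ∂γ := by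
        refine integral_congr_ae (ae_of_all _ fun x => ?_)
        rw [hB]
        exact (integral_cmul γ (x : ℂ) _).symm
      have e2 : ∫ x : ℝ, ∫ z : ℝ, (x : ℂ) * (w + a * x + a * Complex.I * z) ^ k ∂γ ∂γ
          = ∫ z : ℝ, ∫ x : ℝ, (x : ℂ) * (w + a * x + a * Complex.I * z) ^ k ∂γ ∂γ :=
        integral_integral_swap (int_prod2 w a k)
      have e3 : ∀ z : ℝ, ∫ x : ℝ, (x : ℂ) * (w + a * x + a * Complex.I * z) ^ k ∂γ
          = a * k * ∫ x : ℝ, ((w + a * Complex.I * z) + a * x) ^ (k-1) ∂γ := by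
        intro z
        rw [← stein (w + a * Complex.I * z) a k]
        refine integral_congr_ae (ae_of_all _ fun x => ?_)
        ring_nf
      have e4 : ∫ z : ℝ, ∫ x : ℝ, (x : ℂ) * (w + a * x + a * Complex.I * z) ^ k ∂γ ∂γ
          = a * k * ∫ z : ℝ, ∫ x : ℝ, (w + a * x + a * Complex.I * z) ^ (k-1) ∂γ ∂γ := by
        rw [show (∫ z : ℝ, ∫ x : ℝ, (x : ℂ) * (w + a * x + a * Complex.I * z) ^ k ∂γ ∂γ)
            = ∫ z : ℝ, a * k * ∫ x : ℝ, ((w + a * Complex.I * z) + a * x) ^ (k-1) ∂γ ∂γ from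
          integral_congr_ae (ae_of_all _ fun z => e3 z)]
        rw [show (fun z : ℝ => a * (k:ℂ) * ∫ x : ℝ, ((w + a * Complex.I * z) + a * x) ^ (k-1) ∂γ)
            = fun z : ℝ => a * (k:ℂ) * ∫ x : ℝ, (w + a * x + a * Complex.I * z) ^ (k-1) ∂γ from
          funext fun z => by
            congr 1
            exact integral_congr_ae (ae_of_all _ fun x => by ring_nf)]
        exact integral_cmul γ (a * (k:ℂ)) _
      have e5 : ∫ z : ℝ, ∫ x : ℝ, (w + a * x + a * Complex.I * z) ^ (k-1) ∂γ ∂γ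
          = ∫ x : ℝ, B (k-1) x ∂γ :=
        (integral_integral_swap (int_prod1 w a (k-1))).symm
      rw [e1, e2, e4, e5]
    -- assemble
    have houter : ∫ x : ℝ, B (k+1) x ∂γ
        = ∫ x : ℝ, (w * B k x + (a * (x:ℂ) * B k x
            + (a * Complex.I) * ((a * Complex.I) * k * B (k-1) x))) ∂γ := by
      refine integral_congr_ae (ae_of_all _ fun x => ?_)
      rw [stepA x]
      ring
    have hfin : ∫ x : ℝ, B (k+1) x ∂γ = w ^ (k+1) := by
      have hI23 : Integrable (fun x : ℝ => a * (x:ℂ) * B k x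
          + (a * Complex.I) * ((a * Complex.I) * k * B (k-1) x)) γ := hI2.add hI3
      rw [houter, integral_add hI1 hI23, integral_add hI2 hI3, integral_cmul]
      have hup : ∫ x : ℝ, B k x ∂γ = w ^ k := ih
      have ht2 : ∫ x : ℝ, a * (x:ℂ) * B k x ∂γ = a * (a * k * ∫ x : ℝ, B (k-1) x ∂γ) := by
        rw [show (fun x : ℝ => a * (x:ℂ) * B k x) = fun x : ℝ => a * ((x:ℂ) * B k x) from
          funext fun x => by ring]
        rw [integral_cmul, swap1]
      have ht3 : ∫ x : ℝ, (a * Complex.I) * ((a * Complex.I) * k * B (k-1) x) ∂γ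
          = (a * Complex.I) * ((a * Complex.I) * k * ∫ x : ℝ, B (k-1) x ∂γ) := by
        rw [integral_cmul]
        congr 1
        exact integral_cmul γ _ _
      rw [ht2, ht3, hup]
      set Q : ℂ := ∫ x : ℝ, B (k-1) x ∂γ
      have hI2' : Complex.I ^ 2 = -1 := Complex.I_sq
      linear_combination (a * a * (k:ℂ) * Q) * hI2'
    exact hfin

end HGMI

/-- Lemma (Hermite polynomial identity): if X ∼ N(θ, σ²) and Z ∼ N(0,1) is
independent of X, then E[(X + iσZ)^n] = θ^n for every n ≥ 0.  The inner
integral is the Hermite-type polynomial H_n(x; σ²) = E_Z[(x + iσZ)^n]. -/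
theorem hermite_gaussian_moment_identity
    (θ σ : ℝ) (hσ : 0 < σ) (n : ℕ) :
    ∫ x : ℝ, (∫ z : ℝ, ((x : ℂ) + (σ : ℂ) * (z : ℂ) * Complex.I) ^ n ∂(gaussianReal 0 1))
      ∂(gaussianReal θ ((σ ^ 2).toNNReal)) = (θ : ℂ) ^ n := by
  have hmap : gaussianReal θ ((σ ^ 2).toNNReal)
      = (gaussianReal 0 1).map (fun x => σ * x + θ) := by
    have h1 := gaussianReal_map_const_mul (μ := 0) (v := 1) σ
    have h2 := gaussianReal_map_add_const (μ := σ * 0) (v := ⟨σ ^ 2, sq_nonneg σ⟩ * 1) θ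
    calc gaussianReal θ ((σ ^ 2).toNNReal)
        = gaussianReal (σ * 0 + θ) (⟨σ ^ 2, sq_nonneg σ⟩ * 1) := by
          congr 1
          · ring
          · ext
            simp [Real.coe_toNNReal _ (sq_nonneg σ)]
            exact (mul_one _).symm
      _ = ((gaussianReal 0 1).map (σ * ·)).map (· + θ) := by rw [h1]; exact h2.symm
      _ = (gaussianReal 0 1).map (fun x => σ * x + θ) := by
          rw [Measure.map_map (measurable_add_const θ) (measurable_const_mul σ)]
          rfl
  set F : ℝ → ℂ :=
    fun x : ℝ => ∫ z : ℝ, ((x : ℂ) + (σ : ℂ) * (z : ℂ) * Complex.I) ^ n ∂(gaussianReal 0 1)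
    with hF
  have hFc : Continuous F := by
    have h := HGMI.cont_B 0 1 ((σ : ℂ) * Complex.I) n
    have he : F = fun x : ℝ =>
        ∫ z : ℝ, ((0 : ℂ) + 1 * (x : ℂ) + ((σ : ℂ) * Complex.I) * (z : ℂ)) ^ n ∂HGMI.γ := by
      funext x
      refine integral_congr_ae (ae_of_all _ fun z => ?_)
      norm_num
      ring_nf
    rw [he]
    exact h
  rw [hmap, integral_map (by fun_prop) hFc.aestronglyMeasurable]
  have he2 : ∀ x : ℝ, F (σ * x + θ)
      = ∫ z : ℝ, ((θ : ℂ) + (σ : ℂ) * (x : ℂ) + (σ : ℂ) * Complex.I * (z : ℂ)) ^ n ∂HGMI.γ := by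
    intro x
    refine integral_congr_ae (ae_of_all _ fun z => ?_)
    push_cast
    ring_nf
  rw [show (fun x : ℝ => F (σ * x + θ)) = fun x : ℝ =>
      ∫ z : ℝ, ((θ : ℂ) + (σ : ℂ) * (x : ℂ) + (σ : ℂ) * Complex.I * (z : ℂ)) ^ n ∂HGMI.γ from
    funext he2]
  exact HGMI.key (θ : ℂ) (σ : ℂ) n
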